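/- Let M₁, M₂ be perfect matchings of K_{2m}, let l be the number of connected components of M₁ ∪ M₂, and let e be an edge of K_{2m} not in M₁. Then exactly one of the following holds: (1) d(M₁*e, M₂) = d(M₁,M₂) + 1, which happens if and only if the two endpoints of e belong to two different components of M₁ ∪ M₂; (2) d(M₁*e, M₂) = d(M₁,M₂) - 1, which happens if and only if both endpoints of e belong to the same component of M₁ ∪ M₂ and (M₁*e) ∪ M₂ has l+1 components; (3) d(M₁*e, M₂) = d(M₁,M₂), which happens if and only if both endpoints of e belong to the same component of M₁ ∪ M₂ and (M₁*e) ∪ M₂ has l components. -/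

import Mathlib

set_option linter.unusedSectionVars false
set_option maxHeartbeats 1000000


open SimpleGraph

/-- A simple graph on `Fin n` is a perfect matching if every vertex is
incident with exactly one edge, i.e. has a unique neighbor. -/
def IsPerfMatching {n : ℕ} (M : SimpleGraph (Fin n)) : Prop :=
  ∀ v, ∃! w, M.Adj v w

/-- A simple graph is (i.e. its edges form) a single cycle of length `n`:
there is a cycle of length `n` passing through all of its edges. -/
def IsCycleGraphOfLength {V : Type*} (G : SimpleGraph V) (n : ℕ) : Prop :=
  ∃ (v : V) (p : G.Walk v v), p.IsCycle ∧ p.length = n ∧ ∀ e ∈ G.edgeSet, e ∈ p.edges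

/-- Two perfect matchings are adjacent in the matching graph `𝒫ₘ` iff they are
distinct and their symmetric difference is a cycle of length four. -/
def MatchAdj {n : ℕ} (M₁ M₂ : SimpleGraph (Fin n)) : Prop :=
  M₁ ≠ M₂ ∧ IsCycleGraphOfLength (symmDiff M₁ M₂) 4

/-- Vertices of the graph `𝒫ₘ`: all perfect matchings of `K_{2m}`. -/
abbrev PMVertex (m : ℕ) := {M : SimpleGraph (Fin (2 * m)) // IsPerfMatching M}

/-- The graph `𝒫ₘ` of perfect matchings of `K_{2m}`. -/
def matchingGraph (m : ℕ) : SimpleGraph (PMVertex m) where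
  Adj M₁ M₂ := MatchAdj M₁.1 M₂.1
  symm := ⟨by
    rintro M₁ M₂ ⟨hne, hc⟩
    exact ⟨hne.symm, by rwa [symmDiff_comm]⟩⟩
  loopless := ⟨fun M h => h.1 rfl⟩

/-- The number of geodesics (shortest paths) between two vertices of a graph. -/
noncomputable def geodesicCount {V : Type*} (G : SimpleGraph V) (u v : V) : ℕ :=
  Nat.card {p : G.Walk u v // p.IsPath ∧ p.length = G.dist u v}
/-- The unique neighbor of `v` in a (perfect) matching `M`
(junk value `v` itself if `v` has no neighbor). -/
noncomputable def matchOf {V : Type*} (M : SimpleGraph V) (v : V) : V := by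
  classical
  exact if h : ∃ w, M.Adj v w then h.choose else v

/-- Insertion `M * e` of an edge `e = {v₁, v₂}` into a perfect matching `M`:
if `e ∈ M` then `M * e = M`; otherwise the edges `{v₁, v₃}` and `{v₂, v₄}` of `M`
incident with `v₁` and `v₂` are deleted and the edges `{v₁, v₂}` and `{v₃, v₄}`
are added. -/
noncomputable def insertEdge {V : Type*} (M : SimpleGraph V) (e : Sym2 V) : SimpleGraph V := by
  classical
  exact if e ∈ M.edgeSet then M
  else SimpleGraph.fromEdgeSet
    ({f | f ∈ M.edgeSet ∧ ∀ v ∈ e, v ∉ f} ∪ {e, Sym2.map (matchOf M) e})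

/-- Iterated insertion `M * (e₁, …, eₙ) = (M * (e₁, …, eₙ₋₁)) * eₙ`. -/
noncomputable def insertEdges {V : Type*} (M : SimpleGraph V) (l : List (Sym2 V)) :
    SimpleGraph V :=
  l.foldl insertEdge M


section Aux
variable {V : Type*}

section Basics
variable {M : SimpleGraph V}

lemma matchOf_adj (hM : ∀ v, ∃! w, M.Adj v w) (v : V) : M.Adj v (matchOf M v) := by
  have h : ∃ w, M.Adj v w := (hM v).exists
  unfold matchOf
  rw [dif_pos h]
  exact h.choose_spec

lemma adj_iff_matchOf (hM : ∀ v, ∃! w, M.Adj v w) {v w : V} :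
    M.Adj v w ↔ w = matchOf M v := by
  constructor
  · intro h
    exact (hM v).unique h (matchOf_adj hM v)
  · rintro rfl; exact matchOf_adj hM v

lemma matchOf_invol (hM : ∀ v, ∃! w, M.Adj v w) (v : V) :
    matchOf M (matchOf M v) = v := by
  have h : M.Adj (matchOf M v) v := (matchOf_adj hM v).symm
  exact ((adj_iff_matchOf hM).1 h).symm

lemma matchOf_ne (hM : ∀ v, ∃! w, M.Adj v w) (v : V) : matchOf M v ≠ v := by
  intro h
  have h2 := matchOf_adj hM v
  rw [h] at h2
  exact M.loopless.irrefl v h2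

end Basics

/-- walks stay in a closed set -/
lemma walk_closure {G : SimpleGraph V} {S : Set V}
    (hS : ∀ a ∈ S, ∀ b, G.Adj a b → b ∈ S) :
    ∀ {u v : V}, G.Walk u v → u ∈ S → v ∈ S
  | _, _, SimpleGraph.Walk.nil, hu => hu
  | _, _, SimpleGraph.Walk.cons h p, hu => walk_closure hS p (hS _ hu _ h)

lemma reach_closure {G : SimpleGraph V} {S : Set V}
    (hS : ∀ a ∈ S, ∀ b, G.Adj a b → b ∈ S) {u v : V}
    (h : G.Reachable u v) (hu : u ∈ S) : v ∈ S := by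
  obtain ⟨p⟩ := h
  exact walk_closure hS p hu

/-- confinement: walks in a supergraph H of G either stay G-reachable or
both endpoints lie in the closed set S -/
lemma walk_confine {G H : SimpleGraph V} {S : Set V}
    (hW : ∀ a b, H.Adj a b → G.Adj a b ∨ (a ∈ S ∧ b ∈ S))
    (hcl : ∀ a b, a ∈ S → G.Reachable a b → b ∈ S) :
    ∀ {u v : V}, H.Walk u v → G.Reachable u v ∨ (u ∈ S ∧ v ∈ S)
  | _, _, SimpleGraph.Walk.nil => Or.inl (Reachable.refl _)
  | u, v, SimpleGraph.Walk.cons hadj p => by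
    rcases walk_confine hW hcl p with hr | ⟨hx, hv⟩
    · rcases hW _ _ hadj with hg | ⟨hu, hx⟩
      · exact Or.inl ((hg.reachable).trans hr)
      · exact Or.inr ⟨hu, hcl _ _ hx hr⟩
    · rcases hW _ _ hadj with hg | ⟨hu, _⟩
      · exact Or.inr ⟨hcl _ _ hx (hg.reachable).symm, hv⟩
      · exact Or.inr ⟨hu, hv⟩

/-- parity: a finite set closed under a fixed-point-free involution has even card -/
lemma even_card_invol [DecidableEq V] :
    ∀ (n : ℕ) (s : Finset V) (g : V → V), s.card = n →
    (∀ a ∈ s, g a ∈ s) → (∀ a ∈ s, g (g a) = a) → (∀ a ∈ s, g a ≠ a) →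
    Even s.card := by
  intro n
  induction n using Nat.strong_induction_on with
  | _ n ih =>
    intro s g hc hmem hinv hne
    rcases s.eq_empty_or_nonempty with rfl | ⟨a, ha⟩
    · simp
    · have hga : g a ∈ s.erase a := Finset.mem_erase.2 ⟨hne a ha, hmem a ha⟩
      set t := (s.erase a).erase (g a) with ht
      have hcize : s.card = t.card + 2 := by
        rw [ht, Finset.card_erase_of_mem hga, Finset.card_erase_of_mem ha]
        have h2 : 1 < s.card := Finset.one_lt_card.2 ⟨g a, hmem a ha, a, ha, hne a ha⟩
        omega
      have htmem : ∀ x ∈ t, x ∈ s ∧ x ≠ a ∧ x ≠ g a := by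
        intro x hx
        rw [ht] at hx
        simp only [Finset.mem_erase] at hx
        exact ⟨hx.2.2, hx.2.1, hx.1⟩
      have ht' : Even t.card := by
        refine ih t.card (by omega) t g rfl ?_ ?_ ?_
        · intro x hx
          obtain ⟨hxs, hxa, hxga⟩ := htmem x hx
          rw [ht]
          simp only [Finset.mem_erase]
          refine ⟨?_, ?_, hmem x hxs⟩
          · intro h; exact hxa (by rw [← hinv x hxs, h, hinv a ha])
          · intro h
            apply hxga
            rw [← hinv x hxs, h]
        · intro x hx; exact hinv x (htmem x hx).1
        · intro x hx; exact hne x (htmem x hx).1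
      rw [hcize]
      exact ht'.add even_two

section Counting
variable [Finite V]

lemma ncomp_le_of_le {G H : SimpleGraph V} (h : G ≤ H) :
    Nat.card H.ConnectedComponent ≤ Nat.card G.ConnectedComponent := by
  apply Nat.card_le_card_of_surjective
    (ConnectedComponent.map (SimpleGraph.Hom.ofLE h))
  intro c
  obtain ⟨v, rfl⟩ := c.exists_rep
  exact ⟨G.connectedComponentMk v, rfl⟩

/-- the key two-edge-addition lemma: if every `H`-edge is a `G`-edge or joins
vertices reachable (in `G`) from `p` or `q`, then adding those edges merges at
most the components of `p` and `q`. -/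
lemma addTwo {G H : SimpleGraph V} {p q : V}
    (hle : G ≤ H)
    (hW : ∀ a b, H.Adj a b → G.Adj a b ∨
      ((G.Reachable a p ∨ G.Reachable a q) ∧ (G.Reachable b p ∨ G.Reachable b q))) :
    (G.Reachable p q → Nat.card H.ConnectedComponent = Nat.card G.ConnectedComponent) ∧
    (¬ G.Reachable p q → H.Reachable p q →
      Nat.card H.ConnectedComponent + 1 = Nat.card G.ConnectedComponent) := by
  classical
  set S : Set V := {z | G.Reachable z p ∨ G.Reachable z q} with hS
  have hcl : ∀ a b, a ∈ S → G.Reachable a b → b ∈ S := by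
    rintro a b (h | h) hab
    · exact Or.inl (hab.symm.trans h)
    · exact Or.inr (hab.symm.trans h)
  set φ : G.ConnectedComponent → H.ConnectedComponent :=
    ConnectedComponent.map (SimpleGraph.Hom.ofLE hle) with hφ
  have hφmk : ∀ v : V, φ (G.connectedComponentMk v) = H.connectedComponentMk v :=
    fun v => rfl
  have hsurj : Function.Surjective φ := by
    intro c
    obtain ⟨v, rfl⟩ := c.exists_rep
    exact ⟨G.connectedComponentMk v, hφmk v⟩
  have hcollapse : ∀ x y : V, φ (G.connectedComponentMk x) = φ (G.connectedComponentMk y) →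
      G.Reachable x y ∨ (x ∈ S ∧ y ∈ S) := by
    intro x y hxy
    rw [hφmk, hφmk, ConnectedComponent.eq] at hxy
    obtain ⟨w⟩ := hxy
    exact walk_confine (fun a b hab => (hW a b hab).imp id id) hcl w
  constructor
  · -- p ~G q : counts are equal
    intro hpq
    have hinj : Function.Injective φ := by
      intro X Y hXY
      obtain ⟨x, rfl⟩ := X.exists_rep
      obtain ⟨y, rfl⟩ := Y.exists_rep
      rcases hcollapse x y hXY with h | ⟨hx, hy⟩
      · exact ConnectedComponent.sound h
      · apply ConnectedComponent.sound
        have hx' : G.Reachable x p := hx.elim id (fun h => h.trans hpq.symm)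
        have hy' : G.Reachable y p := hy.elim id (fun h => h.trans hpq.symm)
        exact hx'.trans hy'.symm
    exact le_antisymm (Nat.card_le_card_of_surjective φ hsurj)
      (Nat.card_le_card_of_injective φ hinj)
  · intro hpq hHpq
    have hne : G.connectedComponentMk p ≠ G.connectedComponentMk q := by
      rw [Ne, ConnectedComponent.eq]; exact hpq
    -- strict: Nat.card H.CC < Nat.card G.CC
    have hφeq : φ (G.connectedComponentMk p) = φ (G.connectedComponentMk q) := by
      rw [hφmk, hφmk]; exact ConnectedComponent.sound hHpq
    have hlt : Nat.card H.ConnectedComponent < Nat.card G.ConnectedComponent := by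
      rcases lt_or_eq_of_le (Nat.card_le_card_of_surjective φ hsurj) with h | h
      · exact h
      · exfalso
        have : Function.Bijective φ := by
          have f1 : Fintype G.ConnectedComponent := Fintype.ofFinite _
          have f2 : Fintype H.ConnectedComponent := Fintype.ofFinite _
          rw [Fintype.bijective_iff_surjective_and_card]
          refine ⟨hsurj, ?_⟩
          rw [← Nat.card_eq_fintype_card, ← Nat.card_eq_fintype_card, h]
        exact hne (this.injective hφeq)
    -- lower bound: injection into H.CC ⊕ Unit
    have hub : Nat.card G.ConnectedComponent ≤ Nat.card H.ConnectedComponent + 1 := by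
      have hinj : Function.Injective
          (fun X : G.ConnectedComponent =>
            if X = G.connectedComponentMk q then (Sum.inr () : H.ConnectedComponent ⊕ Unit)
            else Sum.inl (φ X)) := by
        intro X Y hXY
        simp only at hXY
        by_cases hX : X = G.connectedComponentMk q
        · by_cases hY : Y = G.connectedComponentMk q
          · rw [hX, hY]
          · rw [if_pos hX, if_neg hY] at hXY
            exact absurd hXY (by simp)
        · by_cases hY : Y = G.connectedComponentMk q
          · rw [if_neg hX, if_pos hY] at hXY
            exact absurd hXY (by simp)
          · rw [if_neg hX, if_neg hY] at hXY
            simp only [Sum.inl.injEq] at hXY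
            obtain ⟨x, rfl⟩ := X.exists_rep
            obtain ⟨y, rfl⟩ := Y.exists_rep
            rcases hcollapse x y hXY with h | ⟨hx, hy⟩
            · exact ConnectedComponent.sound h
            · have hx' : G.Reachable x p := by
                rcases hx with h | h
                · exact h
                · exact absurd (ConnectedComponent.sound h) hX
              have hy' : G.Reachable y p := by
                rcases hy with h | h
                · exact h
                · exact absurd (ConnectedComponent.sound h) hY
              exact ConnectedComponent.sound (hx'.trans hy'.symm)
      calc Nat.card G.ConnectedComponent ≤ Nat.card (H.ConnectedComponent ⊕ Unit) :=
            Nat.card_le_card_of_injective _ hinj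
        _ = Nat.card H.ConnectedComponent + 1 := by simp [Nat.card_sum]
    omega

end Counting

section MatchCount
variable [Fintype V]

lemma matching_reach_iff {M : SimpleGraph V} (hM : ∀ v, ∃! w, M.Adj v w) {u v : V} :
    M.Reachable u v ↔ v = u ∨ v = matchOf M u := by
  constructor
  · intro h
    have hS : ∀ a ∈ ({u, matchOf M u} : Set V), ∀ b, M.Adj a b → b ∈ ({u, matchOf M u} : Set V) := by
      rintro a (rfl | ha) b hb
      · exact Or.inr ((adj_iff_matchOf hM).1 hb)
      · have : b = matchOf M a := (adj_iff_matchOf hM).1 hb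
        rw [this, ha, matchOf_invol hM]
        exact Or.inl rfl
    have := reach_closure hS h (Or.inl rfl)
    simpa using this
  · rintro (rfl | rfl)
    · exact Reachable.refl _
    · exact (matchOf_adj hM u).reachable

lemma matching_ext {M N : SimpleGraph V} (hM : ∀ v, ∃! w, M.Adj v w)
    (hN : ∀ v, ∃! w, N.Adj v w) (h : ∀ v, matchOf M v = matchOf N v) : M = N := by
  ext a b
  rw [adj_iff_matchOf hM, adj_iff_matchOf hN, h]

lemma card_eq_two_mul_matching {N : SimpleGraph V} (hN : ∀ v, ∃! w, N.Adj v w) :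
    Fintype.card V = 2 * Nat.card N.ConnectedComponent := by
  classical
  letI : Fintype N.ConnectedComponent := Fintype.ofFinite _
  rw [Nat.card_eq_fintype_card]
  have hsum : (Finset.univ : Finset V).card =
      ∑ c : N.ConnectedComponent,
        (Finset.univ.filter (fun v => N.connectedComponentMk v = c)).card :=
    Finset.card_eq_sum_card_fiberwise (fun x _ => Finset.mem_univ _)
  have hfib : ∀ c : N.ConnectedComponent,
      (Finset.univ.filter (fun v => N.connectedComponentMk v = c)).card = 2 := by
    intro c
    obtain ⟨w, rfl⟩ := c.exists_rep
    show (Finset.univ.filter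
      (fun v => N.connectedComponentMk v = N.connectedComponentMk w)).card = 2
    have hset : Finset.univ.filter
        (fun v => N.connectedComponentMk v = N.connectedComponentMk w)
        = {w, matchOf N w} := by
      ext v
      simp only [Finset.mem_filter, Finset.mem_univ, true_and, Finset.mem_insert,
        Finset.mem_singleton, ConnectedComponent.eq]
      rw [SimpleGraph.reachable_comm, matching_reach_iff hN]
    rw [hset, Finset.card_insert_of_notMem (by simp only [Finset.mem_singleton]; exact fun hh => matchOf_ne hN w hh.symm),
      Finset.card_singleton]
  rw [← Finset.card_univ, hsum]
  simp only [hfib]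
  rw [Finset.sum_const, Finset.card_univ, smul_eq_mul, mul_comm]

lemma two_mul_ncomp_le {M G : SimpleGraph V} (hM : ∀ v, ∃! w, M.Adj v w) (hle : M ≤ G) :
    2 * Nat.card G.ConnectedComponent ≤ Fintype.card V := by
  classical
  letI : Fintype G.ConnectedComponent := Fintype.ofFinite _
  rw [Nat.card_eq_fintype_card]
  have hsum : (Finset.univ : Finset V).card =
      ∑ c : G.ConnectedComponent,
        (Finset.univ.filter (fun v => G.connectedComponentMk v = c)).card :=
    Finset.card_eq_sum_card_fiberwise (fun x _ => Finset.mem_univ _)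
  have hfib : ∀ c : G.ConnectedComponent,
      2 ≤ (Finset.univ.filter (fun v => G.connectedComponentMk v = c)).card := by
    intro c
    obtain ⟨w, rfl⟩ := c.exists_rep
    have hsub : ({w, matchOf M w} : Finset V) ⊆
        Finset.univ.filter (fun v => G.connectedComponentMk v = G.connectedComponentMk w) := by
      intro v hv
      simp only [Finset.mem_insert, Finset.mem_singleton] at hv
      simp only [Finset.mem_filter, Finset.mem_univ, true_and]
      rcases hv with rfl | rfl
      · rfl
      · exact ConnectedComponent.sound ((hle (matchOf_adj hM w)).symm.reachable)
    calc 2 = ({w, matchOf M w} : Finset V).card := by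
          rw [Finset.card_insert_of_notMem (by simp only [Finset.mem_singleton]; exact fun hh => matchOf_ne hM w hh.symm),
            Finset.card_singleton]
      _ ≤ _ := Finset.card_le_card hsub
  calc 2 * Fintype.card G.ConnectedComponent
      = ∑ _c : G.ConnectedComponent, 2 := by
        rw [Finset.sum_const, Finset.card_univ, smul_eq_mul, mul_comm]
    _ ≤ ∑ c : G.ConnectedComponent,
        (Finset.univ.filter (fun v => G.connectedComponentMk v = c)).card :=
        Finset.sum_le_sum (fun c _ => hfib c)
    _ = Fintype.card V := by rw [← hsum, Finset.card_univ]

lemma matching_eq_of_ncomp {M N : SimpleGraph V} (hM : ∀ v, ∃! w, M.Adj v w)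
    (hN : ∀ v, ∃! w, N.Adj v w)
    (h : 2 * Nat.card (M ⊔ N).ConnectedComponent = Fintype.card V) : M = N := by
  classical
  by_contra hne
  have hex : ∃ v, matchOf M v ≠ matchOf N v := by
    by_contra h'
    push_neg at h'
    exact hne (matching_ext hM hN h')
  obtain ⟨v, hv⟩ := hex
  set G := M ⊔ N with hG
  letI : Fintype G.ConnectedComponent := Fintype.ofFinite _
  rw [Nat.card_eq_fintype_card] at h
  have hsum : (Finset.univ : Finset V).card =
      ∑ c : G.ConnectedComponent,
        (Finset.univ.filter (fun v => G.connectedComponentMk v = c)).card :=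
    Finset.card_eq_sum_card_fiberwise (fun x _ => Finset.mem_univ _)
  have hfib : ∀ c : G.ConnectedComponent,
      2 ≤ (Finset.univ.filter (fun v => G.connectedComponentMk v = c)).card := by
    intro c
    obtain ⟨w, rfl⟩ := c.exists_rep
    have hsub : ({w, matchOf M w} : Finset V) ⊆
        Finset.univ.filter (fun v => G.connectedComponentMk v = G.connectedComponentMk w) := by
      intro u hu
      simp only [Finset.mem_insert, Finset.mem_singleton] at hu
      simp only [Finset.mem_filter, Finset.mem_univ, true_and]
      rcases hu with rfl | rfl
      · rfl
      · exact ConnectedComponent.sound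
          ((le_sup_left (a := M) (b := N) (matchOf_adj hM w)).symm.reachable)
    calc 2 = ({w, matchOf M w} : Finset V).card := by
          rw [Finset.card_insert_of_notMem (by simp only [Finset.mem_singleton]; exact fun hh => matchOf_ne hM w hh.symm),
            Finset.card_singleton]
      _ ≤ _ := Finset.card_le_card hsub
  have hfib3 : 3 ≤ (Finset.univ.filter
      (fun u => G.connectedComponentMk u = G.connectedComponentMk v)).card := by
    have hsub : ({v, matchOf M v, matchOf N v} : Finset V) ⊆
        Finset.univ.filter (fun u => G.connectedComponentMk u = G.connectedComponentMk v) := by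
      intro u hu
      simp only [Finset.mem_insert, Finset.mem_singleton] at hu
      simp only [Finset.mem_filter, Finset.mem_univ, true_and]
      rcases hu with rfl | rfl | rfl
      · rfl
      · exact ConnectedComponent.sound
          ((le_sup_left (a := M) (b := N) (matchOf_adj hM v)).symm.reachable)
      · exact ConnectedComponent.sound
          ((le_sup_right (a := M) (b := N) (matchOf_adj hN v)).symm.reachable)
    have hcard : ({v, matchOf M v, matchOf N v} : Finset V).card = 3 := by
      rw [Finset.card_insert_of_notMem (by
        simp only [Finset.mem_insert, Finset.mem_singleton, not_or]
        exact ⟨fun hh => matchOf_ne hM v hh.symm, fun hh => matchOf_ne hN v hh.symm⟩),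
        Finset.card_insert_of_notMem (by simpa using hv), Finset.card_singleton]
    calc 3 = _ := hcard.symm
      _ ≤ _ := Finset.card_le_card hsub
  have hlt : 2 * Fintype.card G.ConnectedComponent < Fintype.card V := by
    calc 2 * Fintype.card G.ConnectedComponent
        = ∑ _c : G.ConnectedComponent, 2 := by
          rw [Finset.sum_const, Finset.card_univ, smul_eq_mul, mul_comm]
      _ < ∑ c : G.ConnectedComponent,
          (Finset.univ.filter (fun u => G.connectedComponentMk u = c)).card := by
          apply Finset.sum_lt_sum (fun c _ => hfib c)
          exact ⟨G.connectedComponentMk v, Finset.mem_univ _, by omega⟩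
      _ = Fintype.card V := by rw [← hsum, Finset.card_univ]
  omega

end MatchCount

section Insert
variable {V : Type*} {M : SimpleGraph V} {v₁ v₂ : V}

lemma insertEdge_eq (he : s(v₁, v₂) ∉ M.edgeSet) :
    insertEdge M s(v₁, v₂) = SimpleGraph.fromEdgeSet
      ({f | f ∈ M.edgeSet ∧ ∀ v ∈ s(v₁, v₂), v ∉ f} ∪
        {s(v₁, v₂), Sym2.map (matchOf M) s(v₁, v₂)}) := by
  unfold insertEdge
  rw [if_neg he]

lemma not_adj_of_he (he : s(v₁, v₂) ∉ M.edgeSet) : ¬ M.Adj v₁ v₂ := by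
  rwa [← SimpleGraph.mem_edgeSet]

lemma match_ne₂ (hM : ∀ v, ∃! w, M.Adj v w) (he : s(v₁, v₂) ∉ M.edgeSet) :
    matchOf M v₁ ≠ v₂ := by
  intro h
  exact not_adj_of_he he (by rw [adj_iff_matchOf hM, h])

lemma match_ne₁ (hM : ∀ v, ∃! w, M.Adj v w) (he : s(v₁, v₂) ∉ M.edgeSet) :
    matchOf M v₂ ≠ v₁ := by
  intro h
  apply not_adj_of_he he
  exact ((adj_iff_matchOf hM).2 h.symm).symm

lemma match_inj (hM : ∀ v, ∃! w, M.Adj v w) (hv : v₁ ≠ v₂) :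
    matchOf M v₁ ≠ matchOf M v₂ := by
  intro h
  apply hv
  rw [← matchOf_invol hM v₁, h, matchOf_invol hM]

lemma mem_edge_iff (hM : ∀ v, ∃! w, M.Adj v w) {v : V} {f : Sym2 V} (hf : f ∈ M.edgeSet) :
    v ∈ f ↔ f = s(v, matchOf M v) := by
  induction f with
  | _ a b =>
    rw [SimpleGraph.mem_edgeSet] at hf
    constructor
    · intro hvf
      rw [Sym2.mem_iff] at hvf
      rcases hvf with rfl | rfl
      · rw [(adj_iff_matchOf hM).1 hf]
      · rw [Sym2.eq_swap, (adj_iff_matchOf hM).1 hf.symm]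
    · intro h
      rw [h]
      exact Sym2.mem_mk_left _ _

lemma insertEdge_edgeSet (hM : ∀ v, ∃! w, M.Adj v w) (hv : v₁ ≠ v₂)
    (he : s(v₁, v₂) ∉ M.edgeSet) :
    (insertEdge M s(v₁, v₂)).edgeSet =
      (M.edgeSet \ {s(v₁, matchOf M v₁), s(v₂, matchOf M v₂)}) ∪
        {s(v₁, v₂), s(matchOf M v₁, matchOf M v₂)} := by
  rw [insertEdge_eq he, SimpleGraph.edgeSet_fromEdgeSet]
  ext f
  simp only [Set.mem_diff, Set.mem_union, Set.mem_setOf_eq, Set.mem_insert_iff,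
    Set.mem_singleton_iff, Sym2.map_pair_eq]
  constructor
  · rintro ⟨⟨hfM, hno⟩ | hf, _⟩
    · left
      refine ⟨hfM, ?_⟩
      push_neg
      constructor
      · intro h
        exact absurd (h ▸ Sym2.mem_mk_left v₁ (matchOf M v₁)) (hno v₁ (by simp))
      · intro h
        exact absurd (h ▸ Sym2.mem_mk_left v₂ (matchOf M v₂)) (hno v₂ (by simp))
    · right; exact hf
  · rintro (⟨hfM, hne⟩ | hf)
    · push_neg at hne
      refine ⟨Or.inl ⟨hfM, ?_⟩, M.not_isDiag_of_mem_edgeSet hfM⟩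
      intro v hvmem
      rw [Sym2.mem_iff] at hvmem
      rcases hvmem with rfl | rfl
      · intro hvf
        exact hne.1 ((mem_edge_iff hM hfM).1 hvf)
      · intro hvf
        exact hne.2 ((mem_edge_iff hM hfM).1 hvf)
    · refine ⟨Or.inr hf, ?_⟩
      rcases hf with rfl | rfl
      · rw [Sym2.mem_diagSet, Sym2.mk_isDiag_iff]; exact hv
      · rw [Sym2.mem_diagSet, Sym2.mk_isDiag_iff]; exact match_inj hM hv

lemma insertEdge_adj (hM : ∀ v, ∃! w, M.Adj v w) (hv : v₁ ≠ v₂)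
    (he : s(v₁, v₂) ∉ M.edgeSet) {a b : V} :
    (insertEdge M s(v₁, v₂)).Adj a b ↔
      (M.Adj a b ∧ s(a, b) ≠ s(v₁, matchOf M v₁) ∧ s(a, b) ≠ s(v₂, matchOf M v₂)) ∨
      s(a, b) = s(v₁, v₂) ∨ s(a, b) = s(matchOf M v₁, matchOf M v₂) := by
  rw [← SimpleGraph.mem_edgeSet, insertEdge_edgeSet hM hv he]
  simp only [Set.mem_union, Set.mem_diff, Set.mem_insert_iff, Set.mem_singleton_iff,
    SimpleGraph.mem_edgeSet]
  tauto

lemma insertEdge_adj_new₁ (hM : ∀ v, ∃! w, M.Adj v w) (hv : v₁ ≠ v₂)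
    (he : s(v₁, v₂) ∉ M.edgeSet) : (insertEdge M s(v₁, v₂)).Adj v₁ v₂ := by
  rw [insertEdge_adj hM hv he]
  tauto

lemma insertEdge_adj_new₂ (hM : ∀ v, ∃! w, M.Adj v w) (hv : v₁ ≠ v₂)
    (he : s(v₁, v₂) ∉ M.edgeSet) :
    (insertEdge M s(v₁, v₂)).Adj (matchOf M v₁) (matchOf M v₂) := by
  rw [insertEdge_adj hM hv he]
  tauto

lemma insertEdge_adj_keep (hM : ∀ v, ∃! w, M.Adj v w) (hv : v₁ ≠ v₂)
    (he : s(v₁, v₂) ∉ M.edgeSet) {a : V} (h1 : a ≠ v₁) (h2 : a ≠ v₂)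
    (h3 : a ≠ matchOf M v₁) (h4 : a ≠ matchOf M v₂) :
    (insertEdge M s(v₁, v₂)).Adj a (matchOf M a) := by
  rw [insertEdge_adj hM hv he]
  left
  refine ⟨matchOf_adj hM a, ?_, ?_⟩
  · intro h
    rw [Sym2.eq_iff] at h
    rcases h with ⟨rfl, -⟩ | ⟨rfl, -⟩
    · exact h1 rfl
    · exact h3 rfl
  · intro h
    rw [Sym2.eq_iff] at h
    rcases h with ⟨rfl, -⟩ | ⟨rfl, -⟩
    · exact h2 rfl
    · exact h4 rfl

lemma insertEdge_matching (hM : ∀ v, ∃! w, M.Adj v w) (hv : v₁ ≠ v₂)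
    (he : s(v₁, v₂) ∉ M.edgeSet) :
    ∀ v, ∃! w, (insertEdge M s(v₁, v₂)).Adj v w := by
  classical
  have h31 : matchOf M v₁ ≠ v₁ := matchOf_ne hM v₁
  have h42 : matchOf M v₂ ≠ v₂ := matchOf_ne hM v₂
  have h32 : matchOf M v₁ ≠ v₂ := match_ne₂ hM he
  have h41 : matchOf M v₂ ≠ v₁ := match_ne₁ hM he
  have h34 : matchOf M v₁ ≠ matchOf M v₂ := match_inj hM hv
  set nm : V → V := fun x =>
    if x = v₁ then v₂ else if x = v₂ then v₁ else
    if x = matchOf M v₁ then matchOf M v₂ else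
    if x = matchOf M v₂ then matchOf M v₁ else matchOf M x with hnm
  have e1 : nm v₁ = v₂ := by simp [hnm]
  have e2 : nm v₂ = v₁ := by simp [hnm, hv.symm]
  have e3 : nm (matchOf M v₁) = matchOf M v₂ := by simp [hnm, h31, h32]
  have e4 : nm (matchOf M v₂) = matchOf M v₁ := by simp [hnm, h41, h42, h34.symm]
  have e5 : ∀ a, a ≠ v₁ → a ≠ v₂ → a ≠ matchOf M v₁ → a ≠ matchOf M v₂ →
      nm a = matchOf M a := by
    intro a ha1 ha2 ha3 ha4
    simp [hnm, ha1, ha2, ha3, ha4]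
  have hadj : ∀ a, (insertEdge M s(v₁, v₂)).Adj a (nm a) := by
    intro a
    by_cases ha1 : a = v₁
    · subst ha1; rw [e1]; exact insertEdge_adj_new₁ hM hv he
    · by_cases ha2 : a = v₂
      · subst ha2; rw [e2]; exact (insertEdge_adj_new₁ hM hv he).symm
      · by_cases ha3 : a = matchOf M v₁
        · subst ha3; rw [e3]; exact insertEdge_adj_new₂ hM hv he
        · by_cases ha4 : a = matchOf M v₂
          · subst ha4; rw [e4]; exact (insertEdge_adj_new₂ hM hv he).symm
          · rw [e5 a ha1 ha2 ha3 ha4]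
            exact insertEdge_adj_keep hM hv he ha1 ha2 ha3 ha4
  have huniq : ∀ a b, (insertEdge M s(v₁, v₂)).Adj a b → b = nm a := by
    intro a b hab
    rw [insertEdge_adj hM hv he] at hab
    rcases hab with ⟨hM', hn1, hn2⟩ | hab | hab
    · have hb : b = matchOf M a := (adj_iff_matchOf hM).1 hM'
      subst hb
      have ha1 : a ≠ v₁ := by rintro rfl; exact hn1 rfl
      have ha2 : a ≠ v₂ := by rintro rfl; exact hn2 rfl
      have ha3 : a ≠ matchOf M v₁ := by
        rintro rfl
        apply hn1
        rw [matchOf_invol hM, Sym2.eq_swap]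
      have ha4 : a ≠ matchOf M v₂ := by
        rintro rfl
        apply hn2
        rw [matchOf_invol hM, Sym2.eq_swap]
      rw [e5 a ha1 ha2 ha3 ha4]
    · rw [Sym2.eq_iff] at hab
      rcases hab with ⟨rfl, rfl⟩ | ⟨rfl, rfl⟩
      · rw [e1]
      · rw [e2]
    · rw [Sym2.eq_iff] at hab
      rcases hab with ⟨rfl, rfl⟩ | ⟨rfl, rfl⟩
      · rw [e3]
      · rw [e4]
  intro v
  exact ⟨nm v, hadj v, fun b hb => huniq v b hb⟩

lemma insertEdge_sup_old (hM : ∀ v, ∃! w, M.Adj v w) (hv : v₁ ≠ v₂)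
    (he : s(v₁, v₂) ∉ M.edgeSet) :
    insertEdge M s(v₁, v₂) ⊔
        SimpleGraph.fromEdgeSet {s(v₁, matchOf M v₁), s(v₂, matchOf M v₂)} =
      M ⊔ SimpleGraph.fromEdgeSet {s(v₁, v₂), s(matchOf M v₁, matchOf M v₂)} := by
  rw [← SimpleGraph.edgeSet_inj, SimpleGraph.edgeSet_sup, SimpleGraph.edgeSet_sup,
    insertEdge_edgeSet hM hv he, SimpleGraph.edgeSet_fromEdgeSet,
    SimpleGraph.edgeSet_fromEdgeSet]
  have hm13 : s(v₁, matchOf M v₁) ∈ M.edgeSet := by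
    rw [SimpleGraph.mem_edgeSet]; exact matchOf_adj hM v₁
  have hm24 : s(v₂, matchOf M v₂) ∈ M.edgeSet := by
    rw [SimpleGraph.mem_edgeSet]; exact matchOf_adj hM v₂
  ext f
  simp only [Set.mem_union, Set.mem_diff, Set.mem_insert_iff, Set.mem_singleton_iff,
    Set.mem_setOf_eq, Sym2.mk_isDiag_iff]
  constructor
  · rintro ((⟨hfM, -⟩ | hf) | ⟨hf, -⟩)
    · exact Or.inl hfM
    · exact Or.inr ⟨hf, by
        rcases hf with rfl | rfl
        · exact hv
        · exact match_inj hM hv⟩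
    · rcases hf with rfl | rfl
      · exact Or.inl hm13
      · exact Or.inl hm24
  · rintro (hfM | ⟨hf, -⟩)
    · by_cases h13 : f = s(v₁, matchOf M v₁)
      · refine Or.inr ⟨Or.inl h13, ?_⟩
        rw [h13, Sym2.mem_diagSet, Sym2.mk_isDiag_iff]
        exact (matchOf_ne hM v₁).symm
      · by_cases h24 : f = s(v₂, matchOf M v₂)
        · refine Or.inr ⟨Or.inr h24, ?_⟩
          rw [h24, Sym2.mem_diagSet, Sym2.mk_isDiag_iff]
          exact (matchOf_ne hM v₂).symm
        · exact Or.inl (Or.inl ⟨hfM, by push_neg; exact ⟨h13, h24⟩⟩)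
    · exact Or.inl (Or.inr hf)

end Insert

section KeyCount
variable {V : Type*} [Fintype V] [DecidableEq V] {M N : SimpleGraph V} {v₁ v₂ : V}

lemma addTwo_le {G H : SimpleGraph V} {p q : V} (hle : G ≤ H)
    (hW : ∀ a b, H.Adj a b → G.Adj a b ∨
      ((G.Reachable a p ∨ G.Reachable a q) ∧ (G.Reachable b p ∨ G.Reachable b q)))
    (hHpq : H.Reachable p q) :
    Nat.card G.ConnectedComponent ≤ Nat.card H.ConnectedComponent + 1 := by
  by_cases h : G.Reachable p q
  · rw [(addTwo hle hW).1 h]; omega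
  · rw [← (addTwo hle hW).2 h hHpq]

/-- the parity argument: if `v₁` and `v₂` are in different components of
`M ⊔ N`, then after inserting `s(v₁,v₂)` into `M`, the vertex `v₁` is still
connected to its old partner `matchOf M v₁`. -/
lemma parity_reach (hM : ∀ v, ∃! w, M.Adj v w) (hN : ∀ v, ∃! w, N.Adj v w)
    (hv : v₁ ≠ v₂) (he : s(v₁, v₂) ∉ M.edgeSet)
    (hnr : ¬ (M ⊔ N).Reachable v₁ v₂) :
    (insertEdge M s(v₁, v₂) ⊔ N).Reachable v₁ (matchOf M v₁) := by
  classical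
  set G := M ⊔ N with hG
  set G' := insertEdge M s(v₁, v₂) ⊔ N with hG'
  by_contra h3
  set T : Finset V := Finset.univ.filter (fun y => G'.Reachable v₁ y ∧ G.Reachable v₁ y)
    with hT
  have hmemT : ∀ y, y ∈ T ↔ G'.Reachable v₁ y ∧ G.Reachable v₁ y := by
    intro y; simp [hT]
  have hv₁T : v₁ ∈ T := (hmemT v₁).2 ⟨Reachable.refl _, Reachable.refl _⟩
  have hTeven : Even T.card := by
    refine even_card_invol T.card T (matchOf N) rfl ?_ ?_ ?_
    · intro y hy
      obtain ⟨hy1, hy2⟩ := (hmemT y).1 hy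
      refine (hmemT _).2 ⟨hy1.trans ?_, hy2.trans ?_⟩
      · exact ((le_sup_right : N ≤ G') (matchOf_adj hN y)).reachable
      · exact ((le_sup_right : N ≤ G) (matchOf_adj hN y)).reachable
    · intro y _; exact matchOf_invol hN y
    · intro y _; exact matchOf_ne hN y
  have hT'even : Even (T.erase v₁).card := by
    refine even_card_invol _ _ (matchOf M) rfl ?_ ?_ ?_
    · intro y hy
      obtain ⟨hyne, hyT⟩ := Finset.mem_erase.1 hy
      obtain ⟨hy1, hy2⟩ := (hmemT y).1 hyT
      have hy2' : y ≠ v₂ := by rintro rfl; exact hnr hy2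
      have hy4' : y ≠ matchOf M v₂ := by
        rintro rfl
        exact hnr (hy2.trans ((le_sup_left : M ≤ G) (matchOf_adj hM v₂)).symm.reachable)
      have hy3' : y ≠ matchOf M v₁ := by rintro rfl; exact h3 hy1
      have hadj' : G'.Adj y (matchOf M y) :=
        (le_sup_left : insertEdge M s(v₁, v₂) ≤ G')
          (insertEdge_adj_keep hM hv he hyne hy2' hy3' hy4')
      have hadj : G.Adj y (matchOf M y) := (le_sup_left : M ≤ G) (matchOf_adj hM y)
      refine Finset.mem_erase.2 ⟨?_, (hmemT _).2 ⟨hy1.trans hadj'.reachable,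
        hy2.trans hadj.reachable⟩⟩
      intro h1
      apply hy3'
      rw [← h1, matchOf_invol hM]
    · intro y _; exact matchOf_invol hM y
    · intro y _; exact matchOf_ne hM y
  rw [Finset.card_erase_of_mem hv₁T] at hT'even
  have hpos : 0 < T.card := Finset.card_pos.2 ⟨v₁, hv₁T⟩
  obtain ⟨r1, hr1⟩ := hTeven
  obtain ⟨r2, hr2⟩ := hT'even
  omega

/-- component count after inserting an edge: the three cases -/
lemma insert_ncomp (hM : ∀ v, ∃! w, M.Adj v w) (hN : ∀ v, ∃! w, N.Adj v w)
    (hv : v₁ ≠ v₂) (he : s(v₁, v₂) ∉ M.edgeSet) :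
    (¬ (M ⊔ N).Reachable v₁ v₂ →
      Nat.card (insertEdge M s(v₁, v₂) ⊔ N).ConnectedComponent + 1
        = Nat.card (M ⊔ N).ConnectedComponent) ∧
    ((M ⊔ N).Reachable v₁ v₂ →
      (insertEdge M s(v₁, v₂) ⊔ N).Reachable v₁ (matchOf M v₁) →
      Nat.card (insertEdge M s(v₁, v₂) ⊔ N).ConnectedComponent
        = Nat.card (M ⊔ N).ConnectedComponent) ∧
    ((M ⊔ N).Reachable v₁ v₂ →
      ¬ (insertEdge M s(v₁, v₂) ⊔ N).Reachable v₁ (matchOf M v₁) →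
      Nat.card (insertEdge M s(v₁, v₂) ⊔ N).ConnectedComponent
        = Nat.card (M ⊔ N).ConnectedComponent + 1) := by
  classical
  set G := M ⊔ N with hG
  set G' := insertEdge M s(v₁, v₂) ⊔ N with hG'
  set H := G ⊔ SimpleGraph.fromEdgeSet {s(v₁, v₂), s(matchOf M v₁, matchOf M v₂)} with hH
  have hHalt : H = G' ⊔
      SimpleGraph.fromEdgeSet {s(v₁, matchOf M v₁), s(v₂, matchOf M v₂)} := by
    rw [hH, hG, hG', sup_right_comm, sup_right_comm (insertEdge M s(v₁, v₂)) N,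
      insertEdge_sup_old hM hv he]
  -- reachability facts in G
  have hr13 : G.Reachable v₁ (matchOf M v₁) :=
    ((le_sup_left : M ≤ G) (matchOf_adj hM v₁)).reachable
  have hr24 : G.Reachable v₂ (matchOf M v₂) :=
    ((le_sup_left : M ≤ G) (matchOf_adj hM v₂)).reachable
  -- reachability facts in G'
  have hr12' : G'.Reachable v₁ v₂ :=
    ((le_sup_left : insertEdge M s(v₁, v₂) ≤ G') (insertEdge_adj_new₁ hM hv he)).reachable
  have hr34' : G'.Reachable (matchOf M v₁) (matchOf M v₂) :=
    ((le_sup_left : insertEdge M s(v₁, v₂) ≤ G') (insertEdge_adj_new₂ hM hv he)).reachable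
  -- first application of addTwo : G vs H with p = v₁, q = v₂
  have hW1 : ∀ a b, H.Adj a b → G.Adj a b ∨
      ((G.Reachable a v₁ ∨ G.Reachable a v₂) ∧ (G.Reachable b v₁ ∨ G.Reachable b v₂)) := by
    intro a b hab
    rw [hH, SimpleGraph.sup_adj] at hab
    rcases hab with hab | hab
    · exact Or.inl hab
    · rw [SimpleGraph.fromEdgeSet_adj] at hab
      obtain ⟨hab, -⟩ := hab
      simp only [Set.mem_insert_iff, Set.mem_singleton_iff] at hab
      rcases hab with hab | hab <;> rw [Sym2.eq_iff] at hab <;>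
        rcases hab with ⟨rfl, rfl⟩ | ⟨rfl, rfl⟩
      · exact Or.inr ⟨Or.inl (Reachable.refl _), Or.inr (Reachable.refl _)⟩
      · exact Or.inr ⟨Or.inr (Reachable.refl _), Or.inl (Reachable.refl _)⟩
      · exact Or.inr ⟨Or.inl hr13.symm, Or.inr hr24.symm⟩
      · exact Or.inr ⟨Or.inr hr24.symm, Or.inl hr13.symm⟩
  have hle1 : G ≤ H := le_sup_left
  -- second application : G' vs H with p = v₁, q = matchOf M v₁
  have hW2 : ∀ a b, H.Adj a b → G'.Adj a b ∨
      ((G'.Reachable a v₁ ∨ G'.Reachable a (matchOf M v₁)) ∧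
        (G'.Reachable b v₁ ∨ G'.Reachable b (matchOf M v₁))) := by
    intro a b hab
    rw [hHalt, SimpleGraph.sup_adj] at hab
    rcases hab with hab | hab
    · exact Or.inl hab
    · rw [SimpleGraph.fromEdgeSet_adj] at hab
      obtain ⟨hab, -⟩ := hab
      simp only [Set.mem_insert_iff, Set.mem_singleton_iff] at hab
      rcases hab with hab | hab <;> rw [Sym2.eq_iff] at hab <;>
        rcases hab with ⟨rfl, rfl⟩ | ⟨rfl, rfl⟩
      · exact Or.inr ⟨Or.inl (Reachable.refl _), Or.inr (Reachable.refl _)⟩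
      · exact Or.inr ⟨Or.inr (Reachable.refl _), Or.inl (Reachable.refl _)⟩
      · exact Or.inr ⟨Or.inl hr12'.symm, Or.inr hr34'.symm⟩
      · exact Or.inr ⟨Or.inr hr34'.symm, Or.inl hr12'.symm⟩
  have hle2 : G' ≤ H := by rw [hHalt]; exact le_sup_left
  have hH12 : H.Reachable v₁ v₂ := by
    refine SimpleGraph.Adj.reachable ?_
    rw [hH, SimpleGraph.sup_adj, SimpleGraph.fromEdgeSet_adj]
    exact Or.inr ⟨Or.inl rfl, hv⟩
  have hH13 : H.Reachable v₁ (matchOf M v₁) :=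
    ((le_sup_left : G ≤ H) ((le_sup_left : M ≤ G) (matchOf_adj hM v₁))).reachable
  refine ⟨?_, ?_, ?_⟩
  · intro hnr
    have h1 := (addTwo hle1 hW1).2 hnr hH12
    have h2 := (addTwo hle2 hW2).1 (parity_reach hM hN hv he hnr)
    omega
  · intro hr hr'
    have h1 := (addTwo hle1 hW1).1 hr
    have h2 := (addTwo hle2 hW2).1 hr'
    omega
  · intro hr hnr'
    have h1 := (addTwo hle1 hW1).1 hr
    have h2 := (addTwo hle2 hW2).2 hnr' hH13
    omega

end KeyCount

section AdjStep
variable {n : ℕ}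

lemma matchAdj_insert {M : SimpleGraph (Fin n)} {v₁ v₂ : Fin n}
    (hM : ∀ v, ∃! w, M.Adj v w) (hv : v₁ ≠ v₂) (he : s(v₁, v₂) ∉ M.edgeSet) :
    MatchAdj M (insertEdge M s(v₁, v₂)) := by
  classical
  have hM'm := insertEdge_matching hM hv he
  have h31 : matchOf M v₁ ≠ v₁ := matchOf_ne hM v₁
  have h42 : matchOf M v₂ ≠ v₂ := matchOf_ne hM v₂
  have h32 : matchOf M v₁ ≠ v₂ := match_ne₂ hM he
  have h41 : matchOf M v₂ ≠ v₁ := match_ne₁ hM he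
  have h34 : matchOf M v₁ ≠ matchOf M v₂ := match_inj hM hv
  have hnadj : ¬ M.Adj v₁ v₂ := not_adj_of_he he
  have hnew₁ := insertEdge_adj_new₁ hM hv he
  have hnew₂ := insertEdge_adj_new₂ hM hv he
  constructor
  · intro h
    apply hnadj
    rw [h]
    exact hnew₁
  · have hDadj : ∀ a b : Fin n, (symmDiff M (insertEdge M s(v₁, v₂))).Adj a b ↔
        (M.Adj a b ∧ ¬(insertEdge M s(v₁, v₂)).Adj a b) ∨
        ((insertEdge M s(v₁, v₂)).Adj a b ∧ ¬M.Adj a b) := by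
      intro a b
      rw [symmDiff_def, SimpleGraph.sup_adj, SimpleGraph.sdiff_adj, SimpleGraph.sdiff_adj]
    have hD12 : (symmDiff M (insertEdge M s(v₁, v₂))).Adj v₁ v₂ :=
      (hDadj _ _).2 (Or.inr ⟨hnew₁, hnadj⟩)
    have hD24 : (symmDiff M (insertEdge M s(v₁, v₂))).Adj v₂ (matchOf M v₂) :=
      (hDadj _ _).2 (Or.inl ⟨matchOf_adj hM v₂,
        fun h => h41 ((hM'm v₂).unique h hnew₁.symm)⟩)
    have hD43 : (symmDiff M (insertEdge M s(v₁, v₂))).Adj (matchOf M v₂) (matchOf M v₁) :=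
      (hDadj _ _).2 (Or.inr ⟨hnew₂.symm,
        fun h => h32 (((hM (matchOf M v₂)).unique h (matchOf_adj hM v₂).symm) ▸ rfl)⟩)
    have hD31 : (symmDiff M (insertEdge M s(v₁, v₂))).Adj (matchOf M v₁) v₁ :=
      (hDadj _ _).2 (Or.inl ⟨(matchOf_adj hM v₁).symm,
        fun h => h41 (((hM'm (matchOf M v₁)).unique h hnew₂) ▸ rfl)⟩)
    refine ⟨v₁, SimpleGraph.Walk.cons hD12 (SimpleGraph.Walk.cons hD24
      (SimpleGraph.Walk.cons hD43 (SimpleGraph.Walk.cons hD31 SimpleGraph.Walk.nil))),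
      ?_, rfl, ?_⟩
    · rw [SimpleGraph.Walk.isCycle_def]
      refine ⟨?_, by simp, ?_⟩
      · rw [SimpleGraph.Walk.isTrail_def]
        simp [Sym2.eq_iff, hv, hv.symm, h31, h31.symm, h32, h32.symm, h41, h41.symm,
          h42, h42.symm, h34, h34.symm, Ne.symm]
      · simp [hv, hv.symm, h31, h31.symm, h32, h32.symm, h41, h41.symm,
          h42, h42.symm, h34, h34.symm]
    · intro e heD
      have heD' : e ∈ (M.edgeSet \ (insertEdge M s(v₁, v₂)).edgeSet) ∪
          ((insertEdge M s(v₁, v₂)).edgeSet \ M.edgeSet) := by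
        rw [← SimpleGraph.edgeSet_sdiff, ← SimpleGraph.edgeSet_sdiff,
          ← SimpleGraph.edgeSet_sup, ← symmDiff_def]
        exact heD
      have hclass : e = s(v₁, matchOf M v₁) ∨ e = s(v₂, matchOf M v₂) ∨
          e = s(v₁, v₂) ∨ e = s(matchOf M v₁, matchOf M v₂) := by
        rcases heD' with ⟨heM, heM'⟩ | ⟨heM', heM⟩
        · rw [insertEdge_edgeSet hM hv he] at heM'
          simp only [Set.mem_union, Set.mem_diff, Set.mem_insert_iff,
            Set.mem_singleton_iff] at heM'
          push_neg at heM'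
          rcases heM'.1 heM with h | h
          · exact Or.inl h
          · exact Or.inr (Or.inl h)
        · rw [insertEdge_edgeSet hM hv he] at heM'
          rcases heM' with ⟨h1, -⟩ | h1
          · exact absurd h1 heM
          · rcases h1 with h | h
            · exact Or.inr (Or.inr (Or.inl h))
            · exact Or.inr (Or.inr (Or.inr h))
      simp only [SimpleGraph.Walk.edges_cons, SimpleGraph.Walk.edges_nil, List.mem_cons,
        List.not_mem_nil, or_false]
      rcases hclass with rfl | rfl | rfl | rfl
      · right; right; right; rw [Sym2.eq_swap]
      · right; left; rfl
      · left; rfl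
      · right; right; left; rw [Sym2.eq_swap]

lemma ncomp_step {n : ℕ} {A B N : SimpleGraph (Fin n)} (hA : ∀ v, ∃! w, A.Adj v w)
    (hB : ∀ v, ∃! w, B.Adj v w) (hAB : MatchAdj A B) :
    Nat.card (A ⊔ N).ConnectedComponent ≤ Nat.card (B ⊔ N).ConnectedComponent + 1 := by
  classical
  obtain ⟨-, v, p, hcyc, hlen, hall⟩ := hAB
  have hDadj : ∀ x y : Fin n, (symmDiff A B).Adj x y ↔
      (A.Adj x y ∧ ¬B.Adj x y) ∨ (B.Adj x y ∧ ¬A.Adj x y) := by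
    intro x y
    rw [symmDiff_def, SimpleGraph.sup_adj, SimpleGraph.sdiff_adj, SimpleGraph.sdiff_adj]
  cases p with
  | nil => simp at hlen
  | cons h1 q =>
    cases q with
    | nil => simp at hlen
    | cons h2 r =>
      cases r with
      | nil => simp at hlen
      | cons h3 t =>
        cases t with
        | nil => simp at hlen
        | cons h4 u =>
          cases u with
          | cons h5 w =>
            simp only [SimpleGraph.Walk.length_cons] at hlen
            omega
          | nil =>
            rename_i a b c
            have hsupp := hcyc.support_nodup
            simp only [SimpleGraph.Walk.support_cons, SimpleGraph.Walk.support_nil,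
              List.tail_cons, List.nodup_cons, List.mem_cons, List.mem_singleton,
              List.not_mem_nil, or_false, List.nodup_nil, and_true, not_or] at hsupp
            have hac : a ≠ c := by tauto
            have hbv : b ≠ v := by tauto
            have hbc : b ≠ c := by tauto
            have hcv : c ≠ v := by tauto
            have hedges : ∀ x y : Fin n, (symmDiff A B).Adj x y →
                s(x, y) = s(v, a) ∨ s(x, y) = s(a, b) ∨ s(x, y) = s(b, c) ∨
                  s(x, y) = s(c, v) := by
              intro x y hxy
              have := hall s(x, y) ((SimpleGraph.mem_edgeSet _).2 hxy)
              simpa [SimpleGraph.Walk.edges_cons] using this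
            have hE1 := (hDadj v a).1 h1
            have hE2 := (hDadj a b).1 h2
            have hE3 := (hDadj b c).1 h3
            have hE4 := (hDadj c v).1 h4
            rcases hE1 with ⟨hA1, hB1n⟩ | ⟨hB1, hA1n⟩
            · -- case 1 : s(v,a) is an A-edge
              have hE2' : B.Adj a b ∧ ¬A.Adj a b := by
                rcases hE2 with ⟨hA2, -⟩ | h
                · exact absurd ((hA a).unique hA2 hA1.symm) hbv
                · exact h
              have hE3' : A.Adj b c ∧ ¬B.Adj b c := by
                rcases hE3 with h | ⟨hB3, -⟩
                · exact h
                · exact absurd ((hB b).unique hB3 hE2'.1.symm) (Ne.symm hac)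
              have hE4' : B.Adj c v ∧ ¬A.Adj c v := by
                rcases hE4 with ⟨hA4, -⟩ | h
                · exact absurd ((hA v).unique hA4.symm hA1) (Ne.symm hac)
                · exact h
              set H := (A ⊔ N) ⊔ SimpleGraph.fromEdgeSet {s(a, b), s(c, v)} with hH
              have hBH : B ⊔ N ≤ H := by
                refine sup_le ?_ (le_trans le_sup_right (le_sup_left : A ⊔ N ≤ H))
                intro x y hxy
                by_cases hAxy : A.Adj x y
                · exact (le_sup_left : A ⊔ N ≤ H) ((le_sup_left : A ≤ A ⊔ N) hAxy)
                · have hD : (symmDiff A B).Adj x y := (hDadj x y).2 (Or.inr ⟨hxy, hAxy⟩)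
                  rcases hedges x y hD with hh | hh | hh | hh
                  · rw [Sym2.eq_iff] at hh
                    rcases hh with ⟨rfl, rfl⟩ | ⟨rfl, rfl⟩
                    · exact absurd hxy hB1n
                    · exact absurd hxy.symm hB1n
                  · refine (le_sup_right : _ ≤ H) ?_
                    rw [SimpleGraph.fromEdgeSet_adj]
                    exact ⟨Or.inl hh, hxy.ne⟩
                  · rw [Sym2.eq_iff] at hh
                    rcases hh with ⟨rfl, rfl⟩ | ⟨rfl, rfl⟩
                    · exact absurd hxy hE3'.2
                    · exact absurd hxy.symm hE3'.2
                  · refine (le_sup_right : _ ≤ H) ?_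
                    rw [SimpleGraph.fromEdgeSet_adj]
                    exact ⟨Or.inr hh, hxy.ne⟩
              have hra : (A ⊔ N).Reachable a v :=
                ((le_sup_left : A ≤ A ⊔ N) hA1).symm.reachable
              have hrb : (A ⊔ N).Reachable b c :=
                ((le_sup_left : A ≤ A ⊔ N) hE3'.1).reachable
              have hW : ∀ x y, H.Adj x y → (A ⊔ N).Adj x y ∨
                  (((A ⊔ N).Reachable x v ∨ (A ⊔ N).Reachable x c) ∧
                    ((A ⊔ N).Reachable y v ∨ (A ⊔ N).Reachable y c)) := by
                intro x y hxy
                rw [hH, SimpleGraph.sup_adj] at hxy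
                rcases hxy with hxy | hxy
                · exact Or.inl hxy
                · rw [SimpleGraph.fromEdgeSet_adj] at hxy
                  obtain ⟨hxy, -⟩ := hxy
                  simp only [Set.mem_insert_iff, Set.mem_singleton_iff] at hxy
                  rcases hxy with hh | hh <;> rw [Sym2.eq_iff] at hh <;>
                    rcases hh with ⟨rfl, rfl⟩ | ⟨rfl, rfl⟩
                  · exact Or.inr ⟨Or.inl hra, Or.inr hrb⟩
                  · exact Or.inr ⟨Or.inr hrb, Or.inl hra⟩
                  · exact Or.inr ⟨Or.inr (Reachable.refl _), Or.inl (Reachable.refl _)⟩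
                  · exact Or.inr ⟨Or.inl (Reachable.refl _), Or.inr (Reachable.refl _)⟩
              have hHvc : H.Reachable v c := by
                refine (SimpleGraph.Adj.reachable ?_).symm
                refine (le_sup_right : _ ≤ H) ?_
                rw [SimpleGraph.fromEdgeSet_adj]
                exact ⟨Or.inr rfl, hcv⟩
              have k1 := addTwo_le (le_sup_left : A ⊔ N ≤ H) hW hHvc
              have k2 := ncomp_le_of_le hBH
              rw [hH] at k2
              omega
            · -- case 2 : s(v,a) is a B-edge
              have hE2' : A.Adj a b ∧ ¬B.Adj a b := by
                rcases hE2 with h | ⟨hB2, -⟩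
                · exact h
                · exact absurd ((hB a).unique hB2 hB1.symm) hbv
              have hE3' : B.Adj b c ∧ ¬A.Adj b c := by
                rcases hE3 with ⟨hA3, -⟩ | h
                · exact absurd ((hA b).unique hA3 hE2'.1.symm) (Ne.symm hac)
                · exact h
              have hE4' : A.Adj c v ∧ ¬B.Adj c v := by
                rcases hE4 with h | ⟨hB4, -⟩
                · exact h
                · exact absurd ((hB v).unique hB4.symm hB1) (Ne.symm hac)
              set H := (A ⊔ N) ⊔ SimpleGraph.fromEdgeSet {s(v, a), s(b, c)} with hH
              have hBH : B ⊔ N ≤ H := by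
                refine sup_le ?_ (le_trans le_sup_right (le_sup_left : A ⊔ N ≤ H))
                intro x y hxy
                by_cases hAxy : A.Adj x y
                · exact (le_sup_left : A ⊔ N ≤ H) ((le_sup_left : A ≤ A ⊔ N) hAxy)
                · have hD : (symmDiff A B).Adj x y := (hDadj x y).2 (Or.inr ⟨hxy, hAxy⟩)
                  rcases hedges x y hD with hh | hh | hh | hh
                  · refine (le_sup_right : _ ≤ H) ?_
                    rw [SimpleGraph.fromEdgeSet_adj]
                    exact ⟨Or.inl hh, hxy.ne⟩
                  · rw [Sym2.eq_iff] at hh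
                    rcases hh with ⟨rfl, rfl⟩ | ⟨rfl, rfl⟩
                    · exact absurd hxy hE2'.2
                    · exact absurd hxy.symm hE2'.2
                  · refine (le_sup_right : _ ≤ H) ?_
                    rw [SimpleGraph.fromEdgeSet_adj]
                    exact ⟨Or.inr hh, hxy.ne⟩
                  · rw [Sym2.eq_iff] at hh
                    rcases hh with ⟨rfl, rfl⟩ | ⟨rfl, rfl⟩
                    · exact absurd hxy hE4'.2
                    · exact absurd hxy.symm hE4'.2
              have hrv : (A ⊔ N).Reachable v c :=
                ((le_sup_left : A ≤ A ⊔ N) hE4'.1).symm.reachable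
              have hra : (A ⊔ N).Reachable a b :=
                ((le_sup_left : A ≤ A ⊔ N) hE2'.1).reachable
              have hW : ∀ x y, H.Adj x y → (A ⊔ N).Adj x y ∨
                  (((A ⊔ N).Reachable x c ∨ (A ⊔ N).Reachable x b) ∧
                    ((A ⊔ N).Reachable y c ∨ (A ⊔ N).Reachable y b)) := by
                intro x y hxy
                rw [hH, SimpleGraph.sup_adj] at hxy
                rcases hxy with hxy | hxy
                · exact Or.inl hxy
                · rw [SimpleGraph.fromEdgeSet_adj] at hxy
                  obtain ⟨hxy, -⟩ := hxy
                  simp only [Set.mem_insert_iff, Set.mem_singleton_iff] at hxy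
                  rcases hxy with hh | hh <;> rw [Sym2.eq_iff] at hh <;>
                    rcases hh with ⟨rfl, rfl⟩ | ⟨rfl, rfl⟩
                  · exact Or.inr ⟨Or.inl hrv, Or.inr hra⟩
                  · exact Or.inr ⟨Or.inr hra, Or.inl hrv⟩
                  · exact Or.inr ⟨Or.inr (Reachable.refl _), Or.inl (Reachable.refl _)⟩
                  · exact Or.inr ⟨Or.inl (Reachable.refl _), Or.inr (Reachable.refl _)⟩
              have hHcb : H.Reachable c b := by
                refine (SimpleGraph.Adj.reachable ?_).symm
                refine (le_sup_right : _ ≤ H) ?_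
                rw [SimpleGraph.fromEdgeSet_adj]
                exact ⟨Or.inr rfl, hbc⟩
              have k1 := addTwo_le (le_sup_left : A ⊔ N ≤ H) hW hHcb
              have k2 := ncomp_le_of_le hBH
              rw [hH] at k2
              omega

end AdjStep

section Dist
variable {m : ℕ}

lemma ncomp_self {M : SimpleGraph (Fin (2 * m))} (hM : ∀ v, ∃! w, M.Adj v w) :
    Nat.card (M ⊔ M).ConnectedComponent = m := by
  have h := card_eq_two_mul_matching (V := Fin (2 * m)) hM
  rw [Fintype.card_fin] at h
  rw [sup_idem]
  omega

lemma exists_step {M N : SimpleGraph (Fin (2 * m))} (hM : ∀ v, ∃! w, M.Adj v w)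
    (hN : ∀ v, ∃! w, N.Adj v w) (hne : M ≠ N) :
    ∃ M' : SimpleGraph (Fin (2 * m)), (∀ v, ∃! w, M'.Adj v w) ∧ MatchAdj M M' ∧
      Nat.card (M' ⊔ N).ConnectedComponent
        = Nat.card (M ⊔ N).ConnectedComponent + 1 := by
  classical
  have hex : ∃ v, matchOf M v ≠ matchOf N v := by
    by_contra h'
    push_neg at h'
    exact hne (matching_ext hM hN h')
  obtain ⟨v, hvne⟩ := hex
  have hv : v ≠ matchOf N v := (matchOf_ne hN v).symm
  have he : s(v, matchOf N v) ∉ M.edgeSet := by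
    rw [SimpleGraph.mem_edgeSet]
    intro h
    exact hvne ((adj_iff_matchOf hM).1 h).symm
  refine ⟨insertEdge M s(v, matchOf N v), insertEdge_matching hM hv he,
    matchAdj_insert hM hv he, ?_⟩
  have hr : (M ⊔ N).Reachable v (matchOf N v) :=
    ((le_sup_right : N ≤ M ⊔ N) (matchOf_adj hN v)).reachable
  have hnr' : ¬ (insertEdge M s(v, matchOf N v) ⊔ N).Reachable v (matchOf M v) := by
    intro hreach
    have hclos : ∀ x ∈ ({v, matchOf N v} : Set (Fin (2 * m))), ∀ y,
        (insertEdge M s(v, matchOf N v) ⊔ N).Adj x y →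
        y ∈ ({v, matchOf N v} : Set (Fin (2 * m))) := by
      rintro x (rfl | rfl) y hy
      · rw [SimpleGraph.sup_adj] at hy
        rcases hy with hy | hy
        · exact Or.inr ((insertEdge_matching hM hv he x).unique hy
            (insertEdge_adj_new₁ hM hv he))
        · exact Or.inr ((hN x).unique hy (matchOf_adj hN x))
      · rw [SimpleGraph.sup_adj] at hy
        rcases hy with hy | hy
        · exact Or.inl ((insertEdge_matching hM hv he (matchOf N v)).unique hy
            (insertEdge_adj_new₁ hM hv he).symm)
        · exact Or.inl ((hN (matchOf N v)).unique hy (matchOf_adj hN v).symm)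
    have hmem := reach_closure hclos hreach (Or.inl rfl)
    rcases hmem with h | h
    · exact matchOf_ne hM v h
    · exact match_ne₂ hM he h
  exact (insert_ncomp hM hN hv he).2.2 hr hnr'

lemma walk_lower {X Y : PMVertex m} (p : (matchingGraph m).Walk X Y) :
    m ≤ p.length + Nat.card (X.1 ⊔ Y.1).ConnectedComponent := by
  induction p with
  | nil =>
    rename_i Z
    rw [SimpleGraph.Walk.length_nil, ncomp_self Z.2]
    omega
  | cons h p ih =>
    rename_i X' Z Y'
    have hMA : MatchAdj Z.1 X'.1 := h.symm
    have hZ : ∀ v, ∃! w, (Z.1).Adj v w := Z.2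
    have hX : ∀ v, ∃! w, (X'.1).Adj v w := X'.2
    have hstep : Nat.card (Z.1 ⊔ Y'.1).ConnectedComponent ≤
        Nat.card (X'.1 ⊔ Y'.1).ConnectedComponent + 1 :=
      ncomp_step hZ hX hMA
    rw [SimpleGraph.Walk.length_cons]
    omega

lemma walk_upper : ∀ (n : ℕ) (X Y : PMVertex m),
    Nat.card (X.1 ⊔ Y.1).ConnectedComponent + n = m →
    ∃ p : (matchingGraph m).Walk X Y, p.length = n := by
  intro n
  induction n with
  | zero =>
    intro X Y h
    have hXY : X.1 = Y.1 := by
      apply matching_eq_of_ncomp X.2 Y.2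
      rw [Fintype.card_fin]
      omega
    have hXY' : X = Y := Subtype.ext hXY
    subst hXY'
    exact ⟨SimpleGraph.Walk.nil, rfl⟩
  | succ k ih =>
    intro X Y h
    have hne : X.1 ≠ Y.1 := by
      intro hEq
      rw [← hEq, ncomp_self X.2] at h
      omega
    obtain ⟨M', hM'm, hadj, hcount⟩ := exists_step X.2 Y.2 hne
    obtain ⟨p, hp⟩ := ih ⟨M', hM'm⟩ Y (by rw [hcount]; omega)
    have hadj' : (matchingGraph m).Adj X ⟨M', hM'm⟩ := hadj
    exact ⟨SimpleGraph.Walk.cons hadj' p, by rw [SimpleGraph.Walk.length_cons, hp]⟩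

lemma dist_formula (X Y : PMVertex m) :
    (matchingGraph m).dist X Y + Nat.card (X.1 ⊔ Y.1).ConnectedComponent = m := by
  have hcle : 2 * Nat.card (X.1 ⊔ Y.1).ConnectedComponent ≤ 2 * m := by
    have h := two_mul_ncomp_le X.2 (le_sup_left : X.1 ≤ X.1 ⊔ Y.1)
    rwa [Fintype.card_fin] at h
  obtain ⟨p, hp⟩ := walk_upper (m - Nat.card (X.1 ⊔ Y.1).ConnectedComponent) X Y (by omega)
  have h1 : (matchingGraph m).dist X Y ≤ m - Nat.card (X.1 ⊔ Y.1).ConnectedComponent :=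
    hp ▸ SimpleGraph.dist_le p
  have hreach : (matchingGraph m).Reachable X Y := ⟨p⟩
  obtain ⟨q, hq⟩ := hreach.exists_walk_length_eq_dist
  have h2 := walk_lower q
  omega

end Dist

end Aux

/-- Trichotomy for insertion: for perfect matchings `M₁, M₂` of `K_{2m}`, with
`l` components in `M₁ ∪ M₂`, and an edge `e = {v₁, v₂} ∉ M₁`:
(1) `d(M₁*e, M₂) = d(M₁,M₂) + 1` iff the endpoints of `e` lie in two different
components of `M₁ ∪ M₂`;
(2) `d(M₁*e, M₂) = d(M₁,M₂) - 1` iff they lie in the same component and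
`(M₁*e) ∪ M₂` has `l + 1` components;
(3) `d(M₁*e, M₂) = d(M₁,M₂)` iff they lie in the same component and
`(M₁*e) ∪ M₂` has `l` components. -/
theorem stmt10 (m : ℕ) (M₁ M₂ : PMVertex m) (v₁ v₂ : Fin (2 * m)) (hv : v₁ ≠ v₂)
    (he : s(v₁, v₂) ∉ M₁.1.edgeSet) (l : ℕ)
    (hl : l = Nat.card (M₁.1 ⊔ M₂.1).ConnectedComponent) :
    ∃ h : IsPerfMatching (insertEdge M₁.1 s(v₁, v₂)),
      ((matchingGraph m).dist ⟨insertEdge M₁.1 s(v₁, v₂), h⟩ M₂ =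
          (matchingGraph m).dist M₁ M₂ + 1 ↔
        ¬(M₁.1 ⊔ M₂.1).Reachable v₁ v₂) ∧
      ((matchingGraph m).dist M₁ M₂ =
          (matchingGraph m).dist ⟨insertEdge M₁.1 s(v₁, v₂), h⟩ M₂ + 1 ↔
        ((M₁.1 ⊔ M₂.1).Reachable v₁ v₂ ∧
          Nat.card (insertEdge M₁.1 s(v₁, v₂) ⊔ M₂.1).ConnectedComponent = l + 1)) ∧
      ((matchingGraph m).dist ⟨insertEdge M₁.1 s(v₁, v₂), h⟩ M₂ =
          (matchingGraph m).dist M₁ M₂ ↔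
        ((M₁.1 ⊔ M₂.1).Reachable v₁ v₂ ∧
          Nat.card (insertEdge M₁.1 s(v₁, v₂) ⊔ M₂.1).ConnectedComponent = l)) := by
  classical
  have hM : ∀ v, ∃! w, (M₁.1).Adj v w := M₁.2
  have hN : ∀ v, ∃! w, (M₂.1).Adj v w := M₂.2
  have hins : IsPerfMatching (insertEdge M₁.1 s(v₁, v₂)) := insertEdge_matching hM hv he
  have hmain := insert_ncomp hM hN hv he
  have hd1 := dist_formula M₁ M₂
  have hd2 : (matchingGraph m).dist ⟨insertEdge M₁.1 s(v₁, v₂), hins⟩ M₂ +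
      Nat.card (insertEdge M₁.1 s(v₁, v₂) ⊔ M₂.1).ConnectedComponent = m :=
    dist_formula ⟨insertEdge M₁.1 s(v₁, v₂), hins⟩ M₂
  subst hl
  refine ⟨hins, ?_⟩
  by_cases hr : (M₁.1 ⊔ M₂.1).Reachable v₁ v₂
  · by_cases hr' : (insertEdge M₁.1 s(v₁, v₂) ⊔ M₂.1).Reachable v₁ (matchOf M₁.1 v₁)
    · have hc' := hmain.2.1 hr hr'
      refine ⟨iff_of_false (by omega) (fun h => h hr), ?_, ?_⟩
      · refine iff_of_false (by omega) ?_
        rintro ⟨-, hcc⟩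
        omega
      · exact iff_of_true (by omega) ⟨hr, by omega⟩
    · have hc' := hmain.2.2 hr hr'
      refine ⟨iff_of_false (by omega) (fun h => h hr), ?_, ?_⟩
      · exact iff_of_true (by omega) ⟨hr, by omega⟩
      · refine iff_of_false (by omega) ?_
        rintro ⟨-, hcc⟩
        omega
  · have hc' := hmain.1 hr
    refine ⟨iff_of_true (by omega) hr, ?_, ?_⟩
    · refine iff_of_false (by omega) ?_
      rintro ⟨hrr, -⟩
      exact hr hrr
    · refine iff_of_false (by omega) ?_
      rintro ⟨hrr, -⟩
      exact hr hrr
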